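/- Let x : ℝ → ℝ^n be a curve, V1, V2 : ℝ^n → ℝ, N1, N2 : ℝ^n → ℝ nonnegative functions, and h : ℝ → ℝ nonnegative with h(0) = 0. Suppose there is R > 0 with N1(x(t)) ≤ R for all t ≥ 0, and a constant L_R > 0 such that h(s) ≤ L_R·s for all s with 0 ≤ s ≤ R. Suppose that for every t ≥ 0 the maps t ↦ V1(x(t)) and t ↦ V2(x(t)) are differentiable with (d/dt)V1(x(t)) ≤ -N1(x(t)) and (d/dt)V2(x(t)) ≤ -N2(x(t)) + h(N1(x(t))). Then for every δ with 0 < δ < 1/L_R, setting W := V1 + δ·V2 and γ := min(1 - δ·L_R, δ), one has γ > 0 and, for all t ≥ 0, (d/dt)W(x(t)) ≤ -γ·(N1(x(t)) + N2(x(t))). -/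
import Mathlib

open Filter MeasureTheory

theorem stmt_3 {n : ℕ} (x : ℝ → EuclideanSpace ℝ (Fin n))
    (V1 V2 N1 N2 : EuclideanSpace ℝ (Fin n) → ℝ)
    (h : ℝ → ℝ)
    (hN1 : ∀ y, 0 ≤ N1 y) (hN2 : ∀ y, 0 ≤ N2 y)
    (hh : ∀ r, 0 ≤ h r) (hh0 : h 0 = 0)
    (R : ℝ) (hR : 0 < R) (hbound : ∀ t, 0 ≤ t → N1 (x t) ≤ R)
    (LR : ℝ) (hLR : 0 < LR) (hslope : ∀ s, 0 ≤ s → s ≤ R → h s ≤ LR * s)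
    (v1' v2' : ℝ → ℝ)
    (hd1 : ∀ t, 0 ≤ t → HasDerivAt (fun s => V1 (x s)) (v1' t) t)
    (hd2 : ∀ t, 0 ≤ t → HasDerivAt (fun s => V2 (x s)) (v2' t) t)
    (hineq1 : ∀ t, 0 ≤ t → v1' t ≤ -N1 (x t))
    (hineq2 : ∀ t, 0 ≤ t → v2' t ≤ -N2 (x t) + h (N1 (x t)))
    (δ : ℝ) (hδ0 : 0 < δ) (hδL : δ < 1 / LR) :
    0 < min (1 - δ * LR) δ ∧
    ∀ t, 0 ≤ t →
      ∃ w', HasDerivAt (fun s => V1 (x s) + δ * V2 (x s)) w' t ∧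
        w' ≤ -(min (1 - δ * LR) δ) * (N1 (x t) + N2 (x t)) := by
  have hγ1 : 0 < 1 - δ * LR := by
    have := (lt_div_iff₀ hLR).mp hδL
    nlinarith
  refine ⟨lt_min hγ1 hδ0, fun t ht => ?_⟩
  refine ⟨v1' t + δ * v2' t, ((hd1 t ht).add ((hd2 t ht).const_mul δ)), ?_⟩
  have hN1t := hN1 (x t)
  have hN2t := hN2 (x t)
  have hhs := hslope (N1 (x t)) hN1t (hbound t ht)
  have h1 := hineq1 t ht
  have h2 := hineq2 t ht
  have hm1 : min (1 - δ * LR) δ ≤ 1 - δ * LR := min_le_left _ _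
  have hm2 : min (1 - δ * LR) δ ≤ δ := min_le_right _ _
  nlinarith [mul_le_mul_of_nonneg_left h2 hδ0.le, mul_le_mul_of_nonneg_right hm1 hN1t, mul_le_mul_of_nonneg_right hm2 hN2t]
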